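/- For α > −1 (real) and β > 0, the generalized Laguerre functions are orthogonal in the weighted L² space: ∫₀^∞ l_k^{α,β}(x)·l_m^{α,β}(x)·x^α dx = β^{−α−1}·(Γ(k+α+1)/k!)·δ_{k,m} for all k, m ∈ ℕ. -/

import Mathlib

open Finset

/-- Generalized Laguerre polynomial `L_k^α(x)`, extended by `0` for negative index `k`. -/
noncomputable def genLaguerre (α : ℝ) (k : ℤ) (x : ℝ) : ℝ :=
  if k < 0 then 0 else
    ∑ ν ∈ Finset.range (k.toNat + 1),
      (ascPochhammer ℝ (k.toNat - ν)).eval (α + ν + 1) /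
        ((k.toNat - ν).factorial * ν.factorial) * (-x) ^ ν


/-- Generalized Laguerre function `l_k^{α,β}(x) = e^{-βx/2} L_k^α(βx)`. -/
noncomputable def genLaguerreFun (α β : ℝ) (k : ℤ) (x : ℝ) : ℝ :=
  Real.exp (-(β * x) / 2) * genLaguerre α k (β * x)

open Polynomial

lemma fd (m : ℕ) (p : Polynomial ℝ) (hp : p.natDegree ≤ m) :
    ∑ ν ∈ Finset.range (m + 1), (-1 : ℝ) ^ ν * (m.choose ν : ℝ) * p.eval (ν : ℝ) =
      (-1 : ℝ) ^ m * (m.factorial : ℝ) * p.coeff m := by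
  induction m generalizing p with
  | zero =>
      obtain ⟨c, rfl⟩ : ∃ c, p = C c := ⟨p.coeff 0, Polynomial.eq_C_of_natDegree_le_zero hp⟩
      simp
  | succ m ih =>
      set q : Polynomial ℝ := p - Polynomial.taylor 1 p with hq
      have hqeval : ∀ x : ℝ, q.eval x = p.eval x - p.eval (x + 1) := by
        intro x; simp [hq, Polynomial.taylor_eval]
      have hcoeff_high : ∀ N, m + 1 ≤ N → (Polynomial.taylor 1 p).coeff N = p.coeff N := by
        intro N hN
        rw [Polynomial.taylor_coeff]
        have hd : (Polynomial.hasseDeriv N p).natDegree < 1 := by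
          have := Polynomial.natDegree_hasseDeriv_le p N
          omega
        rw [Polynomial.eval_eq_sum_range' hd]
        simp [Polynomial.hasseDeriv_coeff]
      have hqdeg : q.natDegree ≤ m := by
        rw [Polynomial.natDegree_le_iff_coeff_eq_zero]
        intro N hN
        have : m + 1 ≤ N := hN
        simp [hq, Polynomial.coeff_sub, hcoeff_high N this]
      have hqm : q.coeff m = -((m : ℝ) + 1) * p.coeff (m + 1) := by
        have hd : (Polynomial.hasseDeriv m p).natDegree < 2 := by
          have := Polynomial.natDegree_hasseDeriv_le p m
          omega
        have : (Polynomial.taylor 1 p).coeff m = p.coeff m + ((m:ℝ) + 1) * p.coeff (m + 1) := by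
          rw [Polynomial.taylor_coeff, Polynomial.eval_eq_sum_range' hd]
          rw [Finset.sum_range_succ, Finset.sum_range_succ]
          simp only [Polynomial.hasseDeriv_coeff, Polynomial.coeff_zero, one_pow, mul_one,
            Nat.choose_self, Nat.cast_one, zero_add, one_mul]
          rw [Nat.add_comm 1 m, Nat.choose_succ_self_right]
          push_cast; ring
        rw [hq, Polynomial.coeff_sub, this]; ring
      have key : ∑ ν ∈ Finset.range (m + 1 + 1), (-1:ℝ)^ν * (((m+1).choose ν : ℕ) : ℝ) * p.eval (ν:ℝ)
          = ∑ i ∈ Finset.range (m+1), (-1:ℝ)^i * (m.choose i : ℝ) * q.eval (i:ℝ) := by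
        rw [Finset.sum_range_succ' (fun ν => (-1:ℝ)^ν * (((m+1).choose ν : ℕ) : ℝ) * p.eval (ν:ℝ)) (m+1)]
        have step1 : ∀ i ∈ Finset.range (m+1),
            (fun ν => (-1:ℝ)^ν * (((m+1).choose ν : ℕ) : ℝ) * p.eval (ν:ℝ)) (i+1)
            = ((-1:ℝ)^i * (m.choose i : ℝ) * (q.eval (i:ℝ) - p.eval (i:ℝ)))
              + (-1:ℝ)^(i+1) * (m.choose (i+1) : ℝ) * p.eval ((i:ℝ)+1) := by
          intro i _
          have hqe := hqeval (i : ℝ)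
          simp only []
          push_cast [Nat.choose_succ_succ, hqe]
          ring
        rw [Finset.sum_congr rfl step1, Finset.sum_add_distrib]
        have h2 : ∑ i ∈ Finset.range (m+1), (-1:ℝ)^(i+1) * (m.choose (i+1):ℝ) * p.eval ((i:ℝ)+1)
            = (∑ ν ∈ Finset.range (m+2), (-1:ℝ)^ν * (m.choose ν:ℝ) * p.eval (ν:ℝ)) - p.eval 0 := by
          rw [Finset.sum_range_succ' (fun ν => (-1:ℝ)^ν * (m.choose ν:ℝ) * p.eval (ν:ℝ)) (m+1)]
          have hc : ∀ i ∈ Finset.range (m+1),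
              (fun ν => (-1:ℝ)^ν * (m.choose ν:ℝ) * p.eval (ν:ℝ)) (i+1)
              = (-1:ℝ)^(i+1) * (m.choose (i+1):ℝ) * p.eval ((i:ℝ)+1) := by
            intro i _; push_cast; ring
          rw [Finset.sum_congr rfl hc]
          simp
        have hT' : ∑ ν ∈ Finset.range (m+2), (-1:ℝ)^ν * (m.choose ν:ℝ) * p.eval (ν:ℝ)
            = ∑ ν ∈ Finset.range (m+1), (-1:ℝ)^ν * (m.choose ν:ℝ) * p.eval (ν:ℝ) := by
          rw [Finset.sum_range_succ]
          simp [Nat.choose_succ_self]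
        have h3 : ∑ i ∈ Finset.range (m+1), (-1:ℝ)^i * (m.choose i:ℝ) * (q.eval (i:ℝ) - p.eval (i:ℝ))
            = (∑ i ∈ Finset.range (m+1), (-1:ℝ)^i * (m.choose i:ℝ) * q.eval (i:ℝ))
              - ∑ i ∈ Finset.range (m+1), (-1:ℝ)^i * (m.choose i:ℝ) * p.eval (i:ℝ) := by
          rw [← Finset.sum_sub_distrib]
          exact Finset.sum_congr rfl (fun i _ => by ring)
        rw [h2, hT', h3]
        simp
      rw [key, ih q hqdeg, hqm]
      rw [Nat.factorial_succ]
      push_cast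
      ring

lemma Gamma_asc (x : ℝ) (hx : 0 < x) (n : ℕ) :
    Real.Gamma (x + n) = (ascPochhammer ℝ n).eval x * Real.Gamma x := by
  induction n with
  | zero => simp
  | succ n ih =>
      have hxn : x + n ≠ 0 := by positivity
      have : x + (n + 1 : ℕ) = (x + n) + 1 := by push_cast; ring
      rw [this, Real.Gamma_add_one hxn, ih, ascPochhammer_succ_right]
      simp only [Polynomial.eval_mul, Polynomial.eval_add, Polynomial.eval_X,
        Polynomial.eval_natCast]
      ring

lemma innerSumGamma (α : ℝ) (hα : -1 < α) (m ν : ℕ) (hν : ν ≤ m) :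
    ∑ μ ∈ Finset.range (m + 1),
      (ascPochhammer ℝ (m - μ)).eval (α + μ + 1) / ((m - μ).factorial * μ.factorial)
        * (-1 : ℝ) ^ μ * Real.Gamma (α + ν + μ + 1)
    = if ν = m then (-1 : ℝ) ^ m * Real.Gamma (α + m + 1) else 0 := by
  set P : Polynomial ℝ := (ascPochhammer ℝ ν).comp (Polynomial.X + Polynomial.C (α + 1)) with hP
  have hPmono : P.Monic := (monic_ascPochhammer ℝ ν).comp_X_add_C _
  have hPdeg : P.natDegree = ν := by
    rw [hP, Polynomial.natDegree_comp, ascPochhammer_natDegree, Polynomial.natDegree_X_add_C,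
      mul_one]
  have hterm : ∀ μ ∈ Finset.range (m + 1),
      (ascPochhammer ℝ (m - μ)).eval (α + μ + 1) / ((m - μ).factorial * μ.factorial)
        * (-1 : ℝ) ^ μ * Real.Gamma (α + ν + μ + 1)
      = Real.Gamma (α + m + 1) / (m.factorial : ℝ)
          * ((-1 : ℝ) ^ μ * (m.choose μ : ℝ) * P.eval (μ : ℝ)) := by
    intro μ hμ
    have hμm : μ ≤ m := Nat.lt_succ_iff.mp (Finset.mem_range.mp hμ)
    have hx : (0:ℝ) < α + μ + 1 := by
      have : (0:ℝ) ≤ μ := Nat.cast_nonneg μ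
      linarith
    have hG1 : Real.Gamma (α + m + 1)
        = (ascPochhammer ℝ (m - μ)).eval (α + μ + 1) * Real.Gamma (α + μ + 1) := by
      have := Gamma_asc (α + μ + 1) hx (m - μ)
      rw [Nat.cast_sub hμm] at this
      rw [← this]; ring_nf
    have hG2 : Real.Gamma (α + ν + μ + 1)
        = (ascPochhammer ℝ ν).eval (α + μ + 1) * Real.Gamma (α + μ + 1) := by
      have := Gamma_asc (α + μ + 1) hx ν
      rw [← this]; ring_nf
    have hGpos : 0 < Real.Gamma (α + μ + 1) := Real.Gamma_pos_of_pos hx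
    have hchoose : (m.choose μ : ℝ) * ((m - μ).factorial : ℝ) * (μ.factorial : ℝ)
        = (m.factorial : ℝ) := by
      exact_mod_cast congrArg (Nat.cast : ℕ → ℝ)
        (by rw [mul_right_comm]; exact Nat.choose_mul_factorial_mul_factorial hμm)
    have hPeval : P.eval (μ : ℝ) = (ascPochhammer ℝ ν).eval (α + μ + 1) := by
      rw [hP, Polynomial.eval_comp]
      simp only [Polynomial.eval_add, Polynomial.eval_X, Polynomial.eval_C]
      ring_nf
    rw [hG2, hPeval]
    have hf1 : ((m - μ).factorial : ℝ) ≠ 0 := Nat.cast_ne_zero.mpr (Nat.factorial_ne_zero _)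
    have hf2 : ((μ).factorial : ℝ) ≠ 0 := Nat.cast_ne_zero.mpr (Nat.factorial_ne_zero _)
    have hfm : ((m).factorial : ℝ) ≠ 0 := Nat.cast_ne_zero.mpr (Nat.factorial_ne_zero _)
    field_simp
    rw [hG1]
    linear_combination (-(Polynomial.eval (α + (μ:ℝ) + 1) (ascPochhammer ℝ (m - μ)) *
      Polynomial.eval (α + (μ:ℝ) + 1) (ascPochhammer ℝ ν) * Real.Gamma (α + (μ:ℝ) + 1))) * hchoose
  rw [Finset.sum_congr rfl hterm, ← Finset.mul_sum, fd m P (by omega : P.natDegree ≤ m)]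
  have hcoeff : P.coeff m = if ν = m then 1 else 0 := by
    rcases eq_or_ne ν m with h | h
    · subst h
      simp only [if_pos rfl]
      have := hPmono.coeff_natDegree
      rwa [hPdeg] at this
    · rw [if_neg h]
      exact Polynomial.coeff_eq_zero_of_natDegree_lt (by omega)
  rw [hcoeff]
  rcases eq_or_ne ν m with h | h
  · rw [if_pos h, if_pos h]
    have hfm : ((m).factorial : ℝ) ≠ 0 := Nat.cast_ne_zero.mpr (Nat.factorial_ne_zero _)
    field_simp
  · rw [if_neg h, if_neg h]
    ring

noncomputable def lagCoeff (α : ℝ) (n ν : ℕ) : ℝ :=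
  (ascPochhammer ℝ (n - ν)).eval (α + ν + 1) / ((n - ν).factorial * ν.factorial)

lemma genLaguerre_nat (α : ℝ) (k : ℕ) (x : ℝ) :
    genLaguerre α k x = ∑ ν ∈ Finset.range (k + 1), lagCoeff α k ν * (-x) ^ ν := by
  simp [genLaguerre, lagCoeff]

lemma main_int (α : ℝ) (hα : -1 < α) (k m : ℕ) (hkm : k ≤ m) :
    ∫ t in Set.Ioi (0:ℝ), Real.exp (-t) * genLaguerre α k t * genLaguerre α m t * t ^ α
      = if k = m then Real.Gamma (α + m + 1) / (m.factorial : ℝ) else 0 := by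
  have hpos : ∀ ν μ : ℕ, (0:ℝ) < α + ν + μ + 1 := by
    intro ν μ
    have h1 : (0:ℝ) ≤ ν := Nat.cast_nonneg ν
    have h2 : (0:ℝ) ≤ μ := Nat.cast_nonneg μ
    linarith
  have hrw : Set.EqOn
      (fun t => Real.exp (-t) * genLaguerre α k t * genLaguerre α m t * t ^ α)
      (fun t => ∑ ν ∈ Finset.range (k+1), ∑ μ ∈ Finset.range (m+1),
        (lagCoeff α k ν * lagCoeff α m μ * (-1:ℝ)^(ν+μ)) *
          (Real.exp (-t) * t ^ (α + ν + μ + 1 - 1))) (Set.Ioi 0) := by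
    intro t ht
    have ht' : (0:ℝ) < t := ht
    simp only [genLaguerre_nat, Finset.sum_mul, Finset.mul_sum]
    rw [Finset.sum_comm]
    refine Finset.sum_congr rfl fun ν _ => Finset.sum_congr rfl fun μ _ => ?_
    have hpow : t ^ (α + ν + μ + 1 - 1) = t ^ α * ((t:ℝ) ^ (ν:ℕ) * (t:ℝ) ^ (μ:ℕ)) := by
      rw [show α + (ν:ℝ) + (μ:ℝ) + 1 - 1 = α + (ν:ℝ) + (μ:ℝ) by ring,
        Real.rpow_add ht', Real.rpow_add ht', Real.rpow_natCast, Real.rpow_natCast]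
      ring
    rw [hpow, neg_pow t ν, neg_pow t μ]
    ring
  rw [MeasureTheory.setIntegral_congr_fun measurableSet_Ioi hrw]
  have hint : ∀ ν μ : ℕ, MeasureTheory.IntegrableOn
      (fun t => (lagCoeff α k ν * lagCoeff α m μ * (-1:ℝ)^(ν+μ)) *
        (Real.exp (-t) * t ^ (α + ν + μ + 1 - 1))) (Set.Ioi 0) :=
    fun ν μ => (Real.GammaIntegral_convergent (hpos ν μ)).const_mul _
  rw [MeasureTheory.integral_finset_sum _ (fun ν _ =>
    MeasureTheory.integrable_finset_sum _ (fun μ _ => hint ν μ))]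
  have hgamma : ∀ ν μ : ℕ,
      (∫ t in Set.Ioi (0:ℝ), (lagCoeff α k ν * lagCoeff α m μ * (-1:ℝ)^(ν+μ)) *
        (Real.exp (-t) * t ^ (α + ν + μ + 1 - 1)))
      = lagCoeff α k ν * (-1:ℝ)^ν *
          (lagCoeff α m μ * (-1:ℝ)^μ * Real.Gamma (α + ν + μ + 1)) := by
    intro ν μ
    rw [MeasureTheory.integral_const_mul, ← Real.Gamma_eq_integral (hpos ν μ)]
    ring
  calc ∑ ν ∈ Finset.range (k+1), ∫ t in Set.Ioi (0:ℝ), ∑ μ ∈ Finset.range (m+1),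
        (lagCoeff α k ν * lagCoeff α m μ * (-1:ℝ)^(ν+μ)) *
          (Real.exp (-t) * t ^ (α + ν + μ + 1 - 1))
      = ∑ ν ∈ Finset.range (k+1), lagCoeff α k ν * (-1:ℝ)^ν *
          ∑ μ ∈ Finset.range (m+1),
            lagCoeff α m μ * (-1:ℝ)^μ * Real.Gamma (α + ν + μ + 1) := by
        refine Finset.sum_congr rfl fun ν _ => ?_
        rw [MeasureTheory.integral_finset_sum _ (fun μ _ => hint ν μ), Finset.mul_sum]
        exact Finset.sum_congr rfl fun μ _ => hgamma ν μ
    _ = ∑ ν ∈ Finset.range (k+1), lagCoeff α k ν * (-1:ℝ)^ν *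
          (if ν = m then (-1:ℝ)^m * Real.Gamma (α + m + 1) else 0) := by
        refine Finset.sum_congr rfl fun ν hν => ?_
        have hνm : ν ≤ m := le_trans (Nat.lt_succ_iff.mp (Finset.mem_range.mp hν)) hkm
        rw [← innerSumGamma α hα m ν hνm]
        simp only [lagCoeff]
    _ = if k = m then Real.Gamma (α + m + 1) / (m.factorial : ℝ) else 0 := by
        have hsplit : ∀ ν ∈ Finset.range (k+1),
            lagCoeff α k ν * (-1:ℝ)^ν * (if ν = m then (-1:ℝ)^m * Real.Gamma (α + m + 1) else 0)
            = if ν = m then lagCoeff α k ν * (-1:ℝ)^ν * ((-1:ℝ)^m * Real.Gamma (α + m + 1))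
              else 0 := fun ν _ => by rw [mul_ite, mul_zero]
        rw [Finset.sum_congr rfl hsplit, Finset.sum_ite_eq' (Finset.range (k+1)) m]
        by_cases h : k = m
        · subst h
          rw [if_pos (Finset.self_mem_range_succ k), if_pos rfl]
          have hlc : lagCoeff α k k = 1 / (k.factorial : ℝ) := by simp [lagCoeff]
          have hsq : ((-1:ℝ)^k) * ((-1:ℝ)^k) = 1 := by
            rw [← pow_add]; exact Even.neg_one_pow ⟨k, rfl⟩
          rw [hlc]
          linear_combination (Real.Gamma (α + (k:ℝ) + 1) / (k.factorial : ℝ)) * hsq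
        · rw [if_neg h, if_neg (by simp only [Finset.mem_range]; omega : ¬ m ∈ Finset.range (k+1))]

lemma main_int_all (α : ℝ) (hα : -1 < α) (k m : ℕ) :
    ∫ t in Set.Ioi (0:ℝ), Real.exp (-t) * genLaguerre α k t * genLaguerre α m t * t ^ α
      = if k = m then Real.Gamma ((k:ℝ) + α + 1) / (k.factorial : ℝ) else 0 := by
  rcases le_total k m with h | h
  · rw [main_int α hα k m h]
    rcases eq_or_ne k m with rfl | hne
    · rw [if_pos rfl, if_pos rfl, show α + (k:ℝ) + 1 = (k:ℝ) + α + 1 by ring]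
    · rw [if_neg hne, if_neg hne]
  · have hswap : Set.EqOn
        (fun t => Real.exp (-t) * genLaguerre α k t * genLaguerre α m t * t ^ α)
        (fun t => Real.exp (-t) * genLaguerre α m t * genLaguerre α k t * t ^ α)
        (Set.Ioi 0) := fun t _ => by ring
    rw [MeasureTheory.setIntegral_congr_fun measurableSet_Ioi hswap, main_int α hα m k h]
    rcases eq_or_ne k m with rfl | hne
    · rw [if_pos rfl, if_pos rfl, show α + (k:ℝ) + 1 = (k:ℝ) + α + 1 by ring]
    · rw [if_neg (Ne.symm hne), if_neg hne]

theorem genLaguerreFun_orthogonality_aux (α β : ℝ) (hα : -1 < α) (hβ : 0 < β) (k m : ℕ) :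
    ∫ x in Set.Ioi (0 : ℝ),
        genLaguerreFun α β k x * genLaguerreFun α β m x * x ^ α
      = β ^ (-α - 1) *
          (if k = m then Real.Gamma ((k : ℝ) + α + 1) / (k.factorial : ℝ) else 0) := by
  set F : ℝ → ℝ := fun t => Real.exp (-t) * genLaguerre α k t * genLaguerre α m t * t ^ α
    with hFdef
  have hF : Set.EqOn (fun x => genLaguerreFun α β k x * genLaguerreFun α β m x * x ^ α)
      (fun x => β ^ (-α) * F (β * x)) (Set.Ioi 0) := by
    intro x hx
    have hx' : (0:ℝ) < x := hx
    simp only [genLaguerreFun, hFdef]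
    have hexp : Real.exp (-(β*x)) = Real.exp (-(β*x)/2) * Real.exp (-(β*x)/2) := by
      rw [← Real.exp_add]; ring_nf
    have hrpow : (β * x) ^ α = β ^ α * x ^ α := Real.mul_rpow hβ.le hx'.le
    have hβα : β ^ (-α) * β ^ α = 1 := by
      rw [← Real.rpow_add hβ]; simp
    rw [hexp, hrpow]
    linear_combination (-(Real.exp (-(β*x)/2) * Real.exp (-(β*x)/2) *
      genLaguerre α k (β*x) * genLaguerre α m (β*x) * x ^ α)) * hβα
  rw [MeasureTheory.setIntegral_congr_fun measurableSet_Ioi hF,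
    MeasureTheory.integral_const_mul, MeasureTheory.integral_comp_mul_left_Ioi F 0 hβ, mul_zero]
  rw [hFdef, main_int_all α hα k m, smul_eq_mul]
  have hβr : β ^ (-α - 1) = β ^ (-α) * β⁻¹ := by
    rw [Real.rpow_sub hβ, Real.rpow_one]
    rfl
  rw [hβr]; ring

theorem genLaguerreFun_orthogonality (α β : ℝ) (hα : -1 < α) (hβ : 0 < β) (k m : ℕ) :
    ∫ x in Set.Ioi (0 : ℝ),
        genLaguerreFun α β k x * genLaguerreFun α β m x * x ^ α
      = β ^ (-α - 1) *
          (if k = m then Real.Gamma ((k : ℝ) + α + 1) / (k.factorial : ℝ) else 0) := by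
  exact genLaguerreFun_orthogonality_aux α β hα hβ k m
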